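/- For every integer n ≥ 1 and every real h with 0 ≤ h ≤ l_n, the infimum of Γ^0_{nm}(h) over integers m ≥ 1 is attained, and it equals the minimum of Γ^0_{nm}(h) over integers m with A_n(h) ≤ m ≤ B_n(h). -/

import Mathlib

/-- The function `Γ⁰_{nm}(h)` associated to the sequence `{l_n}`. -/
noncomputable def Gamma0F (l : ℕ → ℝ) (n m : ℕ) (h : ℝ) : ℝ :=
  if m < n then
    (if l m ≤ h then
      Real.exp h * ∑ k ∈ Finset.Icc (m + 1) n, Real.exp (-l k)
    else
      l m - h + Real.exp h * ∑ k ∈ Finset.Icc m n, Real.exp (-l k))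
  else if m = n then min h (l n - h)
  else
    (if l m ≤ h then
      Real.exp h * ∑ k ∈ Finset.Icc n (m - 1), Real.exp (-l k)
    else
      l m - h + Real.exp h * ∑ k ∈ Finset.Icc n m, Real.exp (-l k))

/-- `A_n(h)`: the largest positive integer `m < n` with `l_m ≤ h`, or `1` if there is none. -/
noncomputable def AFun (l : ℕ → ℝ) (n : ℕ) (h : ℝ) : ℕ :=
  sSup ({1} ∪ {m : ℕ | 1 ≤ m ∧ m < n ∧ l m ≤ h})

/-- `B_n(h)`: the smallest integer `m > n` with `l_m ≤ h`, or `∞` if there is none. -/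
noncomputable def BFun (l : ℕ → ℝ) (n : ℕ) (h : ℝ) : ℕ∞ :=
  sInf {x : ℕ∞ | ∃ m : ℕ, x = (m : ℕ∞) ∧ n < m ∧ l m ≤ h}

/-- `inf_{m ≥ 1} Γ⁰_{nm}(h)`. -/
noncomputable def infGamma0F (l : ℕ → ℝ) (n : ℕ) (h : ℝ) : ℝ :=
  sInf {x : ℝ | ∃ m : ℕ, 1 ≤ m ∧ x = Gamma0F l n m h}

/-- The set whose supremum is `K⁰ = sup_{n ≥ 1} sup_{h ∈ [0, l_n]} inf_{m ≥ 1} Γ⁰_{nm}(h)`. -/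
def K0SetF (l : ℕ → ℝ) : Set ℝ :=
  {x : ℝ | ∃ n : ℕ, 1 ≤ n ∧ ∃ h : ℝ, 0 ≤ h ∧ h ≤ l n ∧ x = infGamma0F l n h}

/-- For every integer `n ≥ 1` and every real `h` with `0 ≤ h ≤ l_n`, the infimum of
`Γ⁰_{nm}(h)` over integers `m ≥ 1` is attained, and it equals the minimum of `Γ⁰_{nm}(h)`
over integers `m` with `A_n(h) ≤ m ≤ B_n(h)`. -/
theorem stmt3 (l : ℕ → ℝ) (hl : ∀ n : ℕ, 1 ≤ n → 0 < l n)
    (n : ℕ) (hn : 1 ≤ n) (h : ℝ) (h0 : 0 ≤ h) (hln : h ≤ l n) :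
    ∃ m₀ : ℕ, 1 ≤ m₀ ∧ AFun l n h ≤ m₀ ∧ (m₀ : ℕ∞) ≤ BFun l n h ∧
      ∀ m : ℕ, 1 ≤ m → Gamma0F l n m₀ h ≤ Gamma0F l n m h := by
  classical
  have expos : ∀ k : ℕ, (0:ℝ) ≤ Real.exp (-l k) := fun k => (Real.exp_pos _).le
  have ehpos : (0:ℝ) < Real.exp h := Real.exp_pos h
  -- value at n
  have hGn : Gamma0F l n n h = min h (l n - h) := by simp [Gamma0F]
  set C := min h (l n - h) with hC
  have hC0 : 0 ≤ C := le_min h0 (by linarith)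
  -- unfoldings
  have Glt : ∀ m : ℕ, m < n → Gamma0F l n m h =
      if l m ≤ h then Real.exp h * ∑ k ∈ Finset.Icc (m+1) n, Real.exp (-l k)
      else l m - h + Real.exp h * ∑ k ∈ Finset.Icc m n, Real.exp (-l k) := by
    intro m hm; simp [Gamma0F, hm]
  have Ggt : ∀ m : ℕ, n < m → Gamma0F l n m h =
      if l m ≤ h then Real.exp h * ∑ k ∈ Finset.Icc n (m-1), Real.exp (-l k)
      else l m - h + Real.exp h * ∑ k ∈ Finset.Icc n m, Real.exp (-l k) := by
    intro m hm
    have h1 : ¬ m < n := by omega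
    have h2 : m ≠ n := by omega
    simp [Gamma0F, h1, h2]
  -- lower bound for m > n
  have Ggt_lb : ∀ m : ℕ, n < m →
      Real.exp h * ∑ k ∈ Finset.Icc n (m-1), Real.exp (-l k) ≤ Gamma0F l n m h := by
    intro m hm
    rw [Ggt m hm]
    by_cases hlm : l m ≤ h
    · rw [if_pos hlm]
    · rw [if_neg hlm]
      push_neg at hlm
      have h1 : Finset.Icc n (m-1) ⊆ Finset.Icc n m := Finset.Icc_subset_Icc le_rfl (by omega)
      have h2 : ∑ k ∈ Finset.Icc n (m-1), Real.exp (-l k)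
          ≤ ∑ k ∈ Finset.Icc n m, Real.exp (-l k) :=
        Finset.sum_le_sum_of_subset_of_nonneg h1 (fun k _ _ => expos k)
      have h3 := mul_le_mul_of_nonneg_left h2 ehpos.le
      linarith
  -- l-bound for small-Gamma indices above n
  have hlbound : ∀ m : ℕ, n < m → Gamma0F l n m h ≤ C → l m ≤ h + C := by
    intro m hm hGm
    by_cases hlm : l m ≤ h
    · linarith
    · push_neg at hlm
      rw [Ggt m hm, if_neg (not_le.mpr hlm)] at hGm
      have h4 : (0:ℝ) ≤ ∑ k ∈ Finset.Icc n m, Real.exp (-l k) :=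
        Finset.sum_nonneg fun k _ => expos k
      nlinarith
  -- facts about AFun
  have hAbdd : BddAbove ({1} ∪ {m : ℕ | 1 ≤ m ∧ m < n ∧ l m ≤ h}) := by
    refine ⟨n, fun x hx => ?_⟩
    rcases hx with hx | hx
    · simp only [Set.mem_singleton_iff] at hx; omega
    · exact hx.2.1.le
  have hAmem : AFun l n h ∈ ({1} ∪ {m : ℕ | 1 ≤ m ∧ m < n ∧ l m ≤ h}) :=
    Nat.sSup_mem ⟨1, Or.inl rfl⟩ hAbdd
  have hA1 : 1 ≤ AFun l n h := le_csSup hAbdd (Or.inl rfl)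
  have hAn : AFun l n h ≤ n := by
    rcases hAmem with hx | hx
    · simp only [Set.mem_singleton_iff] at hx; omega
    · exact hx.2.1.le
  -- facts about BFun
  have hB_le : ∀ m : ℕ, n < m → l m ≤ h → BFun l n h ≤ (m : ℕ∞) :=
    fun m h1 h2 => sInf_le ⟨m, rfl, h1, h2⟩
  have hB_gt : ((n + 1 : ℕ) : ℕ∞) ≤ BFun l n h := by
    apply le_sInf
    rintro x ⟨m, rfl, h1, h2⟩
    exact_mod_cast Nat.succ_le_of_lt h1
  -- the sublevel set above n is finite
  have hSfin : {m : ℕ | n < m ∧ Gamma0F l n m h ≤ C}.Finite := by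
    by_contra hinf
    set K := ⌈C * Real.exp C⌉₊ with hK
    obtain ⟨T, hTsub, hTcard⟩ := Set.Infinite.exists_subset_card_eq hinf (K + 2)
    have hTne : T.Nonempty := Finset.card_pos.mp (by omega)
    set M := T.max' hTne with hM
    have hMS : M ∈ {m : ℕ | n < m ∧ Gamma0F l n m h ≤ C} := hTsub (T.max'_mem hTne)
    have key : ∀ k ∈ {m : ℕ | n < m ∧ Gamma0F l n m h ≤ C},
        Real.exp (-(h+C)) ≤ Real.exp (-l k) := by
      intro k hk
      exact Real.exp_le_exp.mpr (by have := hlbound k hk.1 hk.2; linarith)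
    have hsub : T.erase M ⊆ Finset.Icc n (M-1) := by
      intro k hk
      have hkT := Finset.mem_of_mem_erase hk
      have hkne := Finset.ne_of_mem_erase hk
      have h1 : n < k := (hTsub hkT).1
      have h2 := T.le_max' k hkT
      simp only [Finset.mem_Icc]
      omega
    have hsum : (K+1 : ℝ) * Real.exp (-(h+C))
        ≤ ∑ k ∈ Finset.Icc n (M-1), Real.exp (-l k) := by
      calc (K+1:ℝ) * Real.exp (-(h+C)) = ∑ _k ∈ T.erase M, Real.exp (-(h+C)) := by
            rw [Finset.sum_const, Finset.card_erase_of_mem (T.max'_mem hTne), hTcard]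
            push_cast
            ring
        _ ≤ ∑ k ∈ T.erase M, Real.exp (-l k) :=
            Finset.sum_le_sum (fun k hk => key k (hTsub (Finset.mem_of_mem_erase hk)))
        _ ≤ ∑ k ∈ Finset.Icc n (M-1), Real.exp (-l k) :=
            Finset.sum_le_sum_of_subset_of_nonneg hsub (fun k _ _ => expos k)
    have hlb := Ggt_lb M hMS.1
    have hGM := hMS.2
    have h5 := mul_le_mul_of_nonneg_left hsum ehpos.le
    have h6 : Real.exp h * Real.exp (-(h+C)) = Real.exp (-C) := by
      rw [← Real.exp_add]
      ring_nf
    have h7 : (K+1:ℝ) * Real.exp (-C) ≤ C := by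
      calc (K+1:ℝ) * Real.exp (-C) = Real.exp h * ((K+1:ℝ) * Real.exp (-(h+C))) := by
            rw [show Real.exp h * ((K+1:ℝ) * Real.exp (-(h+C)))
                = (K+1:ℝ) * (Real.exp h * Real.exp (-(h+C))) by ring, h6]
        _ ≤ Real.exp h * ∑ k ∈ Finset.Icc n (M-1), Real.exp (-l k) := h5
        _ ≤ Gamma0F l n M h := hlb
        _ ≤ C := hGM
    have hceil : C * Real.exp C ≤ (K : ℝ) := Nat.le_ceil _
    have hexpC : 0 < Real.exp C := Real.exp_pos _
    have h8 : (K+1:ℝ) ≤ C * Real.exp C := by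
      have h9 := mul_le_mul_of_nonneg_right h7 hexpC.le
      rwa [mul_assoc, ← Real.exp_add, neg_add_cancel, Real.exp_zero, mul_one] at h9
    linarith
  -- the global minimizer over a finite candidate set
  set F := Finset.Icc 1 n ∪ hSfin.toFinset with hF
  have hnF : n ∈ F := Finset.mem_union_left _ (Finset.mem_Icc.mpr ⟨hn, le_rfl⟩)
  obtain ⟨m₁, hm₁F, hm₁min⟩ := F.exists_min_image (fun m => Gamma0F l n m h) ⟨n, hnF⟩
  have hm₁1 : 1 ≤ m₁ := by
    rcases Finset.mem_union.mp hm₁F with h1 | h1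
    · exact (Finset.mem_Icc.mp h1).1
    · have h2 := ((Set.Finite.mem_toFinset hSfin).mp h1).1
      omega
  have hglobal : ∀ m : ℕ, 1 ≤ m → Gamma0F l n m₁ h ≤ Gamma0F l n m h := by
    intro m hm
    by_cases hcase : m ≤ n
    · exact hm₁min m (Finset.mem_union_left _ (Finset.mem_Icc.mpr ⟨hm, hcase⟩))
    · by_cases hc2 : Gamma0F l n m h ≤ C
      · exact hm₁min m (Finset.mem_union_right _
          ((Set.Finite.mem_toFinset hSfin).mpr ⟨by omega, hc2⟩))
      · have h1 := hm₁min n hnF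
        rw [hGn] at h1
        push_neg at hc2
        linarith
  -- clamp the minimizer into [A, B]
  by_cases hA2 : m₁ < AFun l n h
  · -- replace by A
    have hAne1 : AFun l n h ≠ 1 := by omega
    have hAmem2 : 1 ≤ AFun l n h ∧ AFun l n h < n ∧ l (AFun l n h) ≤ h := by
      rcases hAmem with h1 | h1
      · exact absurd h1 hAne1
      · exact h1
    refine ⟨AFun l n h, hAmem2.1, le_rfl, ?_, ?_⟩
    · calc (AFun l n h : ℕ∞) ≤ ((n + 1 : ℕ) : ℕ∞) := by exact_mod_cast (by omega : AFun l n h ≤ n + 1)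
        _ ≤ BFun l n h := hB_gt
    · intro m hm
      refine le_trans ?_ (hglobal m hm)
      have hAn' : AFun l n h < n := hAmem2.2.1
      rw [Glt _ hAn', if_pos hAmem2.2.2, Glt m₁ (by omega)]
      by_cases hlm : l m₁ ≤ h
      · rw [if_pos hlm]
        exact mul_le_mul_of_nonneg_left
          (Finset.sum_le_sum_of_subset_of_nonneg
            (Finset.Icc_subset_Icc (by omega) le_rfl) fun k _ _ => expos k) ehpos.le
      · rw [if_neg hlm]
        push_neg at hlm
        have h2 := mul_le_mul_of_nonneg_left
          (Finset.sum_le_sum_of_subset_of_nonneg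
            ((Finset.Icc_subset_Icc (by omega) le_rfl) :
              Finset.Icc (AFun l n h + 1) n ⊆ Finset.Icc m₁ n) fun k _ _ => expos k) ehpos.le
        linarith
  · by_cases hB2 : (m₁ : ℕ∞) ≤ BFun l n h
    · exact ⟨m₁, hm₁1, by omega, hB2, hglobal⟩
    · -- replace by B
      have hBlt : BFun l n h < (m₁ : ℕ∞) := not_le.mp hB2
      have hPne : {m : ℕ | n < m ∧ l m ≤ h}.Nonempty := by
        by_contra hemp
        rw [Set.not_nonempty_iff_eq_empty] at hemp
        have htop : BFun l n h = ⊤ := by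
          rw [BFun]
          refine (congrArg sInf (?_ : _ = (∅ : Set ℕ∞))).trans sInf_empty
          ext x
          simp only [Set.mem_setOf_eq, Set.mem_empty_iff_false, iff_false]
          rintro ⟨m, rfl, h1, h2⟩
          exact Set.eq_empty_iff_forall_notMem.mp hemp m ⟨h1, h2⟩
        rw [htop] at hBlt
        exact not_top_lt hBlt
      set b := sInf {m : ℕ | n < m ∧ l m ≤ h} with hb
      have hbmem : b ∈ {m : ℕ | n < m ∧ l m ≤ h} := Nat.sInf_mem hPne
      have hBeq : BFun l n h = (b : ℕ∞) := by
        apply le_antisymm (hB_le b hbmem.1 hbmem.2)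
        apply le_sInf
        rintro x ⟨m, rfl, h1, h2⟩
        have h3 := Nat.sInf_le (show m ∈ {m : ℕ | n < m ∧ l m ≤ h} from ⟨h1, h2⟩)
        exact_mod_cast h3
      have hbm₁ : b < m₁ := by
        rw [hBeq] at hBlt
        exact_mod_cast hBlt
      have hbn : n < b := hbmem.1
      refine ⟨b, by omega, by omega, by rw [hBeq], ?_⟩
      intro m hm
      refine le_trans ?_ (hglobal m hm)
      rw [Ggt b hbn, if_pos hbmem.2, Ggt m₁ (by omega)]
      by_cases hlm : l m₁ ≤ h
      · rw [if_pos hlm]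
        exact mul_le_mul_of_nonneg_left
          (Finset.sum_le_sum_of_subset_of_nonneg
            (Finset.Icc_subset_Icc le_rfl (by omega)) fun k _ _ => expos k) ehpos.le
      · rw [if_neg hlm]
        push_neg at hlm
        have h2 := mul_le_mul_of_nonneg_left
          (Finset.sum_le_sum_of_subset_of_nonneg
            ((Finset.Icc_subset_Icc le_rfl (by omega)) :
              Finset.Icc n (b-1) ⊆ Finset.Icc n m₁) fun k _ _ => expos k) ehpos.le
        linarith
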